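/- (Theorem 4, (2) ⇒ (1).) Suppose J(0, u) ≥ 0 for every control u. Fix x₀ ∈ ℝⁿ and suppose sup_{0 < ε ≤ 1} Σ_{t=0}^{N−1}|u^ε_t|² < ∞, where u^ε is the open-loop optimal control of the perturbed Problem (LQ)_ε for initial value x₀. Then there exists an open-loop optimal control for Problem (LQ) with initial value x₀. -/

import Mathlib

open Matrix Finset

noncomputable section

/-- State trajectory of the discrete-time linear system `x_{t+1} = A_t x_t + B_t u_t`. -/
def lqState {n m : ℕ} (A : ℕ → Matrix (Fin n) (Fin n) ℝ) (B : ℕ → Matrix (Fin n) (Fin m) ℝ)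
    (x₀ : Fin n → ℝ) (u : ℕ → Fin m → ℝ) : ℕ → Fin n → ℝ
  | 0 => x₀
  | t + 1 => A t *ᵥ lqState A B x₀ u t + B t *ᵥ u t

/-- Quadratic cost `J(x₀, u)`. -/
def lqCost {n m : ℕ} (N : ℕ) (A : ℕ → Matrix (Fin n) (Fin n) ℝ)
    (B : ℕ → Matrix (Fin n) (Fin m) ℝ) (Q : ℕ → Matrix (Fin n) (Fin n) ℝ)
    (R : ℕ → Matrix (Fin m) (Fin m) ℝ) (S : ℕ → Matrix (Fin m) (Fin n) ℝ)
    (H : Matrix (Fin n) (Fin n) ℝ) (x₀ : Fin n → ℝ) (u : ℕ → Fin m → ℝ) : ℝ :=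
  (∑ t ∈ range N,
      (lqState A B x₀ u t ⬝ᵥ Q t *ᵥ lqState A B x₀ u t
        + 2 * (u t ⬝ᵥ S t *ᵥ lqState A B x₀ u t)
        + u t ⬝ᵥ R t *ᵥ u t))
    + lqState A B x₀ u N ⬝ᵥ H *ᵥ lqState A B x₀ u N

/-- Closed-loop state `x_{t+1} = (A_t + B_t K_t) x_t + B_t v_t`. -/
def clState {n m : ℕ} (A : ℕ → Matrix (Fin n) (Fin n) ℝ) (B : ℕ → Matrix (Fin n) (Fin m) ℝ)
    (K : ℕ → Matrix (Fin m) (Fin n) ℝ) (v : ℕ → Fin m → ℝ) (x₀ : Fin n → ℝ) :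
    ℕ → Fin n → ℝ
  | 0 => x₀
  | t + 1 => (A t + B t * K t) *ᵥ clState A B K v x₀ t + B t *ᵥ v t

/-- Outcome control `u_t = K_t x_t + v_t` of a closed-loop pair. -/
def clControl {n m : ℕ} (A : ℕ → Matrix (Fin n) (Fin n) ℝ) (B : ℕ → Matrix (Fin n) (Fin m) ℝ)
    (K : ℕ → Matrix (Fin m) (Fin n) ℝ) (v : ℕ → Fin m → ℝ) (x₀ : Fin n → ℝ) (t : ℕ) :
    Fin m → ℝ :=
  K t *ᵥ clState A B K v x₀ t + v t


/-- Perturbed cost `J_ε(x₀,u) = J(x₀,u) + ε Σ|u_t|²`. -/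
def lqCostPert {n m : ℕ} (N : ℕ) (A : ℕ → Matrix (Fin n) (Fin n) ℝ)
    (B : ℕ → Matrix (Fin n) (Fin m) ℝ) (Q : ℕ → Matrix (Fin n) (Fin n) ℝ)
    (R : ℕ → Matrix (Fin m) (Fin m) ℝ) (S : ℕ → Matrix (Fin m) (Fin n) ℝ)
    (H : Matrix (Fin n) (Fin n) ℝ) (ε : ℝ) (x₀ : Fin n → ℝ) (u : ℕ → Fin m → ℝ) : ℝ :=
  lqCost N A B Q R S H x₀ u + ε * ∑ t ∈ range N, u t ⬝ᵥ u t

/-- Auxiliary backward recursion for the perturbed Riccati equation: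
`lqPAux ... k` is the Riccati solution at time `N - k`. -/
def lqPAux {n m : ℕ} (N : ℕ) (A : ℕ → Matrix (Fin n) (Fin n) ℝ)
    (B : ℕ → Matrix (Fin n) (Fin m) ℝ) (Q : ℕ → Matrix (Fin n) (Fin n) ℝ)
    (R : ℕ → Matrix (Fin m) (Fin m) ℝ) (S : ℕ → Matrix (Fin m) (Fin n) ℝ)
    (H : Matrix (Fin n) (Fin n) ℝ) (ε : ℝ) : ℕ → Matrix (Fin n) (Fin n) ℝ
  | 0 => H
  | k + 1 =>
    Q (N - (k + 1)) + (A (N - (k + 1)))ᵀ * lqPAux N A B Q R S H ε k * A (N - (k + 1))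
      - ((A (N - (k + 1)))ᵀ * lqPAux N A B Q R S H ε k * B (N - (k + 1)) + (S (N - (k + 1)))ᵀ)
        * (R (N - (k + 1)) + (B (N - (k + 1)))ᵀ * lqPAux N A B Q R S H ε k * B (N - (k + 1))
            + ε • (1 : Matrix (Fin m) (Fin m) ℝ))⁻¹
        * ((B (N - (k + 1)))ᵀ * lqPAux N A B Q R S H ε k * A (N - (k + 1)) + S (N - (k + 1)))

/-- Solution `P^ε_t` of the perturbed Riccati recursion
`P^ε_N = H`, `P^ε_t = Q_t + A_t′P^ε_{t+1}A_t − (A_t′P^ε_{t+1}B_t + S_t′)(R_t +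
B_t′P^ε_{t+1}B_t + εI)⁻¹(B_t′P^ε_{t+1}A_t + S_t)`. -/
def lqPe {n m : ℕ} (N : ℕ) (A : ℕ → Matrix (Fin n) (Fin n) ℝ)
    (B : ℕ → Matrix (Fin n) (Fin m) ℝ) (Q : ℕ → Matrix (Fin n) (Fin n) ℝ)
    (R : ℕ → Matrix (Fin m) (Fin m) ℝ) (S : ℕ → Matrix (Fin m) (Fin n) ℝ)
    (H : Matrix (Fin n) (Fin n) ℝ) (ε : ℝ) (t : ℕ) : Matrix (Fin n) (Fin n) ℝ :=
  lqPAux N A B Q R S H ε (N - t)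

/-- Perturbed feedback gain `K^ε_t = −(R_t + B_t′P^ε_{t+1}B_t + εI)⁻¹(B_t′P^ε_{t+1}A_t + S_t)`. -/
def lqKe {n m : ℕ} (N : ℕ) (A : ℕ → Matrix (Fin n) (Fin n) ℝ)
    (B : ℕ → Matrix (Fin n) (Fin m) ℝ) (Q : ℕ → Matrix (Fin n) (Fin n) ℝ)
    (R : ℕ → Matrix (Fin m) (Fin m) ℝ) (S : ℕ → Matrix (Fin m) (Fin n) ℝ)
    (H : Matrix (Fin n) (Fin n) ℝ) (ε : ℝ) (t : ℕ) : Matrix (Fin m) (Fin n) ℝ :=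
  -((R t + (B t)ᵀ * lqPe N A B Q R S H ε (t + 1) * B t
      + ε • (1 : Matrix (Fin m) (Fin m) ℝ))⁻¹
    * ((B t)ᵀ * lqPe N A B Q R S H ε (t + 1) * A t + S t))

/-- Perturbed optimal control `u^ε_t = K^ε_t x^ε_t`, where `x^ε` is the closed-loop state
`x^ε_{t+1} = (A_t + B_t K^ε_t) x^ε_t`, `x^ε_0 = x₀`. -/
def lqUe {n m : ℕ} (N : ℕ) (A : ℕ → Matrix (Fin n) (Fin n) ℝ)
    (B : ℕ → Matrix (Fin n) (Fin m) ℝ) (Q : ℕ → Matrix (Fin n) (Fin n) ℝ)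
    (R : ℕ → Matrix (Fin m) (Fin m) ℝ) (S : ℕ → Matrix (Fin m) (Fin n) ℝ)
    (H : Matrix (Fin n) (Fin n) ℝ) (ε : ℝ) (x₀ : Fin n → ℝ) (t : ℕ) : Fin m → ℝ :=
  lqKe N A B Q R S H ε t *ᵥ
    clState A B (lqKe N A B Q R S H ε) (fun _ => 0) x₀ t

lemma dflip {a b : ℕ} (M : Matrix (Fin a) (Fin b) ℝ) (x : Fin a → ℝ) (y : Fin b → ℝ) :
    (M *ᵥ y) ⬝ᵥ x = y ⬝ᵥ (Mᵀ *ᵥ x) := by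
  rw [dotProduct_comm y, mulVec_transpose, ← dotProduct_mulVec, dotProduct_comm]

lemma comp_sq {n m : ℕ} (A : Matrix (Fin n) (Fin n) ℝ) (B : Matrix (Fin n) (Fin m) ℝ)
    (Q : Matrix (Fin n) (Fin n) ℝ) (R : Matrix (Fin m) (Fin m) ℝ) (S : Matrix (Fin m) (Fin n) ℝ)
    (P : Matrix (Fin n) (Fin n) ℝ) (ε : ℝ) (hP : Pᵀ = P)
    (M : Matrix (Fin m) (Fin m) ℝ) (hMdef : M = R + Bᵀ * P * B + ε • (1 : Matrix (Fin m) (Fin m) ℝ))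
    (hM : Mᵀ = M) (hMi : M * M⁻¹ = 1) (hMi' : M⁻¹ * M = 1)
    (x : Fin n → ℝ) (u : Fin m → ℝ) :
    x ⬝ᵥ Q *ᵥ x + 2 * (u ⬝ᵥ S *ᵥ x) + u ⬝ᵥ R *ᵥ u + ε * (u ⬝ᵥ u)
      + (A *ᵥ x + B *ᵥ u) ⬝ᵥ P *ᵥ (A *ᵥ x + B *ᵥ u)
    = x ⬝ᵥ (Q + Aᵀ * P * A - (Aᵀ * P * B + Sᵀ) * M⁻¹ * (Bᵀ * P * A + S)) *ᵥ x
      + (u + (M⁻¹ * (Bᵀ * P * A + S)) *ᵥ x) ⬝ᵥ M *ᵥ (u + (M⁻¹ * (Bᵀ * P * A + S)) *ᵥ x) := by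
  have hMinv : (M⁻¹)ᵀ = M⁻¹ := by rw [Matrix.transpose_nonsing_inv, hM]
  have hLt : Aᵀ * P * B + Sᵀ = (Bᵀ * P * A + S)ᵀ := by
    simp [transpose_add, transpose_mul, hP, Matrix.mul_assoc]
  set L := Bᵀ * P * A + S with hL
  set a := A *ᵥ x with ha
  set b := B *ᵥ u with hb
  set Lx := L *ᵥ x with hLx
  set z := (M⁻¹ : Matrix (Fin m) (Fin m) ℝ) *ᵥ Lx with hz
  have flipB : ∀ y : Fin n → ℝ, u ⬝ᵥ Bᵀ *ᵥ y = b ⬝ᵥ y := fun y => by rw [hb, dflip]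
  have flipA : ∀ y : Fin n → ℝ, x ⬝ᵥ Aᵀ *ᵥ y = a ⬝ᵥ y := fun y => by rw [ha, dflip]
  have hMz : ∀ v : Fin m → ℝ, v ⬝ᵥ M *ᵥ z = v ⬝ᵥ Lx := fun v => by
    rw [hz, mulVec_mulVec, hMi, one_mulVec]
  have hPab : a ⬝ᵥ P *ᵥ b = b ⬝ᵥ P *ᵥ a := by rw [dotProduct_comm, dflip, hP]
  have h3 : (a + b) ⬝ᵥ P *ᵥ (a + b)
      = a ⬝ᵥ P *ᵥ a + 2 * (b ⬝ᵥ P *ᵥ a) + b ⬝ᵥ P *ᵥ b := by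
    simp only [mulVec_add, dotProduct_add, add_dotProduct, hPab]; ring
  have hAPA : x ⬝ᵥ (Aᵀ * P * A) *ᵥ x = a ⬝ᵥ P *ᵥ a := by
    rw [← mulVec_mulVec, ← mulVec_mulVec, flipA]
  have hLML : x ⬝ᵥ (Lᵀ * M⁻¹ * L) *ᵥ x = Lx ⬝ᵥ z := by
    rw [hLx, dflip, hz, hLx, mulVec_mulVec, mulVec_mulVec]
  have h1 : x ⬝ᵥ (Q + Aᵀ * P * A - Lᵀ * M⁻¹ * L) *ᵥ x
      = x ⬝ᵥ Q *ᵥ x + a ⬝ᵥ P *ᵥ a - Lx ⬝ᵥ z := by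
    simp only [sub_mulVec, add_mulVec, dotProduct_sub, dotProduct_add, hAPA, hLML]
  have hMu : u ⬝ᵥ M *ᵥ u = u ⬝ᵥ R *ᵥ u + b ⬝ᵥ P *ᵥ b + ε * (u ⬝ᵥ u) := by
    rw [hMdef]
    simp only [add_mulVec, dotProduct_add, smul_mulVec, one_mulVec, dotProduct_smul,
      smul_eq_mul]
    rw [← mulVec_mulVec, ← mulVec_mulVec, flipB]
  have hLxu : u ⬝ᵥ Lx = b ⬝ᵥ P *ᵥ a + u ⬝ᵥ S *ᵥ x := by
    rw [hLx, hL, add_mulVec, dotProduct_add, ← mulVec_mulVec, ← mulVec_mulVec, flipB]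
  have hzu : z ⬝ᵥ M *ᵥ u = u ⬝ᵥ M *ᵥ z := by rw [dotProduct_comm, dflip, hM]
  have hzz : z ⬝ᵥ M *ᵥ z = Lx ⬝ᵥ z := by
    rw [hMz]; exact dotProduct_comm _ _
  have h2 : (u + z) ⬝ᵥ M *ᵥ (u + z)
      = u ⬝ᵥ R *ᵥ u + b ⬝ᵥ P *ᵥ b + ε * (u ⬝ᵥ u)
        + 2 * (b ⬝ᵥ P *ᵥ a) + 2 * (u ⬝ᵥ S *ᵥ x) + Lx ⬝ᵥ z := by
    simp only [mulVec_add, dotProduct_add, add_dotProduct, hzu, hMz, hMu, hzz, hLxu]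
    rw [dotProduct_comm z Lx]; ring
  have hKx : (M⁻¹ * L) *ᵥ x = z := by rw [← mulVec_mulVec, ← hLx, hz]
  rw [hLt, hKx, h1, h2, h3]; ring
-- shift lemmas (to be appended after defs)
lemma lqState_succ {n m : ℕ} (A : ℕ → Matrix (Fin n) (Fin n) ℝ) (B : ℕ → Matrix (Fin n) (Fin m) ℝ)
    (x₀ : Fin n → ℝ) (u : ℕ → Fin m → ℝ) (t : ℕ) :
    lqState A B x₀ u (t + 1)
      = lqState (fun s => A (s + 1)) (fun s => B (s + 1))
          (A 0 *ᵥ x₀ + B 0 *ᵥ u 0) (fun s => u (s + 1)) t := by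
  induction t with
  | zero => simp [lqState]
  | succ t ih =>
    rw [lqState, ih]
    conv_rhs => rw [lqState]

lemma lqCost_succ {n m : ℕ} (N : ℕ) (A : ℕ → Matrix (Fin n) (Fin n) ℝ)
    (B : ℕ → Matrix (Fin n) (Fin m) ℝ) (Q : ℕ → Matrix (Fin n) (Fin n) ℝ)
    (R : ℕ → Matrix (Fin m) (Fin m) ℝ) (S : ℕ → Matrix (Fin m) (Fin n) ℝ)
    (H : Matrix (Fin n) (Fin n) ℝ) (x₀ : Fin n → ℝ) (u : ℕ → Fin m → ℝ) :
    lqCost (N + 1) A B Q R S H x₀ u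
      = (x₀ ⬝ᵥ Q 0 *ᵥ x₀ + 2 * (u 0 ⬝ᵥ S 0 *ᵥ x₀) + u 0 ⬝ᵥ R 0 *ᵥ u 0)
        + lqCost N (fun s => A (s + 1)) (fun s => B (s + 1)) (fun s => Q (s + 1))
            (fun s => R (s + 1)) (fun s => S (s + 1)) H
            (A 0 *ᵥ x₀ + B 0 *ᵥ u 0) (fun s => u (s + 1)) := by
  unfold lqCost
  rw [Finset.sum_range_succ']
  simp only [lqState_succ A B x₀ u]
  show _ + _ + _ = _
  rw [show lqState A B x₀ u 0 = x₀ from rfl]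
  ring

lemma lqCostPert_succ {n m : ℕ} (N : ℕ) (A : ℕ → Matrix (Fin n) (Fin n) ℝ)
    (B : ℕ → Matrix (Fin n) (Fin m) ℝ) (Q : ℕ → Matrix (Fin n) (Fin n) ℝ)
    (R : ℕ → Matrix (Fin m) (Fin m) ℝ) (S : ℕ → Matrix (Fin m) (Fin n) ℝ)
    (H : Matrix (Fin n) (Fin n) ℝ) (ε : ℝ) (x₀ : Fin n → ℝ) (u : ℕ → Fin m → ℝ) :
    lqCostPert (N + 1) A B Q R S H ε x₀ u
      = (x₀ ⬝ᵥ Q 0 *ᵥ x₀ + 2 * (u 0 ⬝ᵥ S 0 *ᵥ x₀) + u 0 ⬝ᵥ R 0 *ᵥ u 0) + ε * (u 0 ⬝ᵥ u 0)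
        + lqCostPert N (fun s => A (s + 1)) (fun s => B (s + 1)) (fun s => Q (s + 1))
            (fun s => R (s + 1)) (fun s => S (s + 1)) H ε
            (A 0 *ᵥ x₀ + B 0 *ᵥ u 0) (fun s => u (s + 1)) := by
  unfold lqCostPert
  rw [lqCost_succ, Finset.sum_range_succ' (fun t => u t ⬝ᵥ u t) N]
  ring

lemma lqPAux_shift {n m : ℕ} (N : ℕ) (A : ℕ → Matrix (Fin n) (Fin n) ℝ)
    (B : ℕ → Matrix (Fin n) (Fin m) ℝ) (Q : ℕ → Matrix (Fin n) (Fin n) ℝ)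
    (R : ℕ → Matrix (Fin m) (Fin m) ℝ) (S : ℕ → Matrix (Fin m) (Fin n) ℝ)
    (H : Matrix (Fin n) (Fin n) ℝ) (ε : ℝ) (k : ℕ) (hk : k ≤ N) :
    lqPAux (N + 1) A B Q R S H ε k
      = lqPAux N (fun s => A (s + 1)) (fun s => B (s + 1)) (fun s => Q (s + 1))
          (fun s => R (s + 1)) (fun s => S (s + 1)) H ε k := by
  induction k with
  | zero => rfl
  | succ k ih =>
    have hk' : k ≤ N := Nat.le_of_succ_le hk
    have h1 : N + 1 - (k + 1) = N - k := by omega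
    have h2 : N - (k + 1) + 1 = N - k := by omega
    rw [lqPAux, lqPAux, ih hk', h1, h2]

lemma lqPe_shift {n m : ℕ} (N : ℕ) (A : ℕ → Matrix (Fin n) (Fin n) ℝ)
    (B : ℕ → Matrix (Fin n) (Fin m) ℝ) (Q : ℕ → Matrix (Fin n) (Fin n) ℝ)
    (R : ℕ → Matrix (Fin m) (Fin m) ℝ) (S : ℕ → Matrix (Fin m) (Fin n) ℝ)
    (H : Matrix (Fin n) (Fin n) ℝ) (ε : ℝ) (t : ℕ) :
    lqPe (N + 1) A B Q R S H ε (t + 1)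
      = lqPe N (fun s => A (s + 1)) (fun s => B (s + 1)) (fun s => Q (s + 1))
          (fun s => R (s + 1)) (fun s => S (s + 1)) H ε t := by
  unfold lqPe
  rw [show N + 1 - (t + 1) = N - t from by omega]
  exact lqPAux_shift N A B Q R S H ε (N - t) (Nat.sub_le N t)

lemma lqKe_shift {n m : ℕ} (N : ℕ) (A : ℕ → Matrix (Fin n) (Fin n) ℝ)
    (B : ℕ → Matrix (Fin n) (Fin m) ℝ) (Q : ℕ → Matrix (Fin n) (Fin n) ℝ)
    (R : ℕ → Matrix (Fin m) (Fin m) ℝ) (S : ℕ → Matrix (Fin m) (Fin n) ℝ)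
    (H : Matrix (Fin n) (Fin n) ℝ) (ε : ℝ) (t : ℕ) :
    lqKe (N + 1) A B Q R S H ε (t + 1)
      = lqKe N (fun s => A (s + 1)) (fun s => B (s + 1)) (fun s => Q (s + 1))
          (fun s => R (s + 1)) (fun s => S (s + 1)) H ε t := by
  unfold lqKe
  rw [lqPe_shift]

lemma clState_shift {n m : ℕ} (A : ℕ → Matrix (Fin n) (Fin n) ℝ)
    (B : ℕ → Matrix (Fin n) (Fin m) ℝ) (K : ℕ → Matrix (Fin m) (Fin n) ℝ)
    (x : Fin n → ℝ) (t : ℕ) :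
    clState A B K (fun _ => 0) x (t + 1)
      = clState (fun s => A (s + 1)) (fun s => B (s + 1)) (fun s => K (s + 1)) (fun _ => 0)
          ((A 0 + B 0 * K 0) *ᵥ x) t := by
  induction t with
  | zero => simp [clState, mulVec_zero]
  | succ t ih =>
    rw [clState, ih]
    conv_rhs => rw [clState]
def consCtl {m : ℕ} (w : Fin m → ℝ) (v : ℕ → Fin m → ℝ) : ℕ → Fin m → ℝ
  | 0 => w
  | s + 1 => v s

@[simp] lemma consCtl_zero {m : ℕ} (w : Fin m → ℝ) (v : ℕ → Fin m → ℝ) :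
    consCtl w v 0 = w := rfl

@[simp] lemma consCtl_succ {m : ℕ} (w : Fin m → ℝ) (v : ℕ → Fin m → ℝ) (s : ℕ) :
    consCtl w v (s + 1) = v s := rfl

lemma quadM {n m : ℕ} (R : Matrix (Fin m) (Fin m) ℝ) (B : Matrix (Fin n) (Fin m) ℝ)
    (P : Matrix (Fin n) (Fin n) ℝ) (ε : ℝ) (w : Fin m → ℝ) :
    w ⬝ᵥ (R + Bᵀ * P * B + ε • (1 : Matrix (Fin m) (Fin m) ℝ)) *ᵥ w
      = w ⬝ᵥ R *ᵥ w + (B *ᵥ w) ⬝ᵥ P *ᵥ (B *ᵥ w) + ε * (w ⬝ᵥ w) := by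
  simp only [add_mulVec, dotProduct_add, smul_mulVec, one_mulVec, dotProduct_smul,
    smul_eq_mul]
  rw [← mulVec_mulVec, ← mulVec_mulVec, ← dflip]

lemma dot_self_nonneg {k : ℕ} (v : Fin k → ℝ) : 0 ≤ v ⬝ᵥ v := by
  unfold dotProduct
  exact Finset.sum_nonneg fun i _ => mul_self_nonneg _

lemma lqUe_zero {n m : ℕ} (N : ℕ) (A : ℕ → Matrix (Fin n) (Fin n) ℝ)
    (B : ℕ → Matrix (Fin n) (Fin m) ℝ) (Q : ℕ → Matrix (Fin n) (Fin n) ℝ)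
    (R : ℕ → Matrix (Fin m) (Fin m) ℝ) (S : ℕ → Matrix (Fin m) (Fin n) ℝ)
    (H : Matrix (Fin n) (Fin n) ℝ) (ε : ℝ) (x : Fin n → ℝ) :
    lqUe N A B Q R S H ε x 0 = lqKe N A B Q R S H ε 0 *ᵥ x := rfl

lemma lqUe_succ {n m : ℕ} (N : ℕ) (A : ℕ → Matrix (Fin n) (Fin n) ℝ)
    (B : ℕ → Matrix (Fin n) (Fin m) ℝ) (Q : ℕ → Matrix (Fin n) (Fin n) ℝ)
    (R : ℕ → Matrix (Fin m) (Fin m) ℝ) (S : ℕ → Matrix (Fin m) (Fin n) ℝ)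
    (H : Matrix (Fin n) (Fin n) ℝ) (ε : ℝ) (x : Fin n → ℝ) (t : ℕ) :
    lqUe (N + 1) A B Q R S H ε x (t + 1)
      = lqUe N (fun s => A (s + 1)) (fun s => B (s + 1)) (fun s => Q (s + 1))
          (fun s => R (s + 1)) (fun s => S (s + 1)) H ε
          ((A 0 + B 0 * lqKe (N + 1) A B Q R S H ε 0) *ᵥ x) t := by
  unfold lqUe
  rw [lqKe_shift, clState_shift]
  simp only [lqKe_shift]

lemma hpos_shift {n m : ℕ} (N : ℕ) (A : ℕ → Matrix (Fin n) (Fin n) ℝ)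
    (B : ℕ → Matrix (Fin n) (Fin m) ℝ) (Q : ℕ → Matrix (Fin n) (Fin n) ℝ)
    (R : ℕ → Matrix (Fin m) (Fin m) ℝ) (S : ℕ → Matrix (Fin m) (Fin n) ℝ)
    (H : Matrix (Fin n) (Fin n) ℝ)
    (hpos : ∀ u : ℕ → Fin m → ℝ, 0 ≤ lqCost (N + 1) A B Q R S H 0 u) :
    ∀ u' : ℕ → Fin m → ℝ,
      0 ≤ lqCost N (fun s => A (s + 1)) (fun s => B (s + 1)) (fun s => Q (s + 1))
          (fun s => R (s + 1)) (fun s => S (s + 1)) H 0 u' := by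
  intro u'
  have h := hpos (consCtl 0 u')
  rw [lqCost_succ] at h
  simp only [consCtl_zero, consCtl_succ, mulVec_zero, dotProduct_zero, zero_dotProduct,
    add_zero, zero_add, mul_zero] at h
  simpa using h

lemma lq_main {n m : ℕ} (N : ℕ) : ∀ (A : ℕ → Matrix (Fin n) (Fin n) ℝ)
    (B : ℕ → Matrix (Fin n) (Fin m) ℝ) (Q : ℕ → Matrix (Fin n) (Fin n) ℝ)
    (R : ℕ → Matrix (Fin m) (Fin m) ℝ) (S : ℕ → Matrix (Fin m) (Fin n) ℝ)
    (H : Matrix (Fin n) (Fin n) ℝ),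
    (∀ t, (Q t).IsSymm) → (∀ t, (R t).IsSymm) → H.IsSymm →
    (∀ u : ℕ → Fin m → ℝ, 0 ≤ lqCost N A B Q R S H 0 u) → ∀ (ε : ℝ), 0 < ε →
    (lqPe N A B Q R S H ε 0).IsSymm ∧
    (∀ x u, x ⬝ᵥ lqPe N A B Q R S H ε 0 *ᵥ x ≤ lqCostPert N A B Q R S H ε x u) ∧
    (∀ x, lqCostPert N A B Q R S H ε x (lqUe N A B Q R S H ε x)
      = x ⬝ᵥ lqPe N A B Q R S H ε 0 *ᵥ x) := by
  induction N with
  | zero =>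
    intro A B Q R S H hQ hR hH hpos ε hε
    refine ⟨hH, ?_, ?_⟩
    · intro x u
      unfold lqCostPert lqCost
      simp [lqState]
      exact le_of_eq rfl
    · intro x
      unfold lqCostPert lqCost
      simp [lqState]
      rfl
  | succ N IH =>
    intro A B Q R S H hQ hR hH hpos ε hε
    obtain ⟨hP1sym, hlow, heq⟩ := IH (fun s => A (s + 1)) (fun s => B (s + 1))
      (fun s => Q (s + 1)) (fun s => R (s + 1)) (fun s => S (s + 1)) H
      (fun t => hQ (t + 1)) (fun t => hR (t + 1)) hH (hpos_shift N A B Q R S H hpos) ε hε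
    set P₁ := lqPe N (fun s => A (s + 1)) (fun s => B (s + 1)) (fun s => Q (s + 1))
      (fun s => R (s + 1)) (fun s => S (s + 1)) H ε 0 with hP₁def
    have hP1 : lqPe (N + 1) A B Q R S H ε 1 = P₁ := lqPe_shift N A B Q R S H ε 0
    have hP1sym' : P₁ᵀ = P₁ := hP1sym
    set M := R 0 + (B 0)ᵀ * P₁ * B 0 + ε • (1 : Matrix (Fin m) (Fin m) ℝ) with hMdef
    have hMsym : Mᵀ = M := by
      rw [hMdef]
      simp only [transpose_add, transpose_mul, transpose_smul, transpose_one,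
        transpose_transpose, hP1sym', (hR 0).eq, Matrix.mul_assoc]
    -- lower bound on the quadratic form of M
    have hMlb : ∀ w : Fin m → ℝ, ε * (w ⬝ᵥ w) ≤ w ⬝ᵥ M *ᵥ w := by
      intro w
      have hquad := quadM (R 0) (B 0) P₁ ε w
      rw [← hMdef] at hquad
      have h2 := heq (B 0 *ᵥ w)
      have h3 : 0 ≤ ε * ∑ t ∈ Finset.range N,
          (lqUe N (fun s => A (s + 1)) (fun s => B (s + 1)) (fun s => Q (s + 1))
            (fun s => R (s + 1)) (fun s => S (s + 1)) H ε (B 0 *ᵥ w) t) ⬝ᵥ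
          (lqUe N (fun s => A (s + 1)) (fun s => B (s + 1)) (fun s => Q (s + 1))
            (fun s => R (s + 1)) (fun s => S (s + 1)) H ε (B 0 *ᵥ w) t) :=
        mul_nonneg hε.le (Finset.sum_nonneg fun t _ => dot_self_nonneg _)
      have h4 := hpos (consCtl w
        (lqUe N (fun s => A (s + 1)) (fun s => B (s + 1)) (fun s => Q (s + 1))
          (fun s => R (s + 1)) (fun s => S (s + 1)) H ε (B 0 *ᵥ w)))
      rw [lqCost_succ] at h4
      simp only [consCtl_zero, consCtl_succ, mulVec_zero, dotProduct_zero, zero_dotProduct,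
        add_zero, zero_add, mul_zero] at h4
      unfold lqCostPert at h2
      linarith
    have hM0 : ∀ w : Fin m → ℝ, 0 ≤ w ⬝ᵥ M *ᵥ w := fun w =>
      le_trans (mul_nonneg hε.le (dot_self_nonneg w)) (hMlb w)
    have hPD : M.PosDef := by
      refine posDef_iff_dotProduct_mulVec.mpr ⟨?_, ?_⟩
      · rw [Matrix.IsHermitian, conjTranspose_eq_transpose_of_trivial]; exact hMsym
      · intro w hw
        have h1 := hMlb w
        have h2 : 0 < w ⬝ᵥ w :=
          lt_of_le_of_ne (dot_self_nonneg w) (fun hc => hw ((dotProduct_self_eq_zero).mp hc.symm))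
        have : 0 < ε * (w ⬝ᵥ w) := mul_pos hε h2
        simpa using lt_of_lt_of_le this h1
    have hMdet : IsUnit M.det := hPD.det_pos.ne'.isUnit
    have hMi : M * M⁻¹ = 1 := Matrix.mul_nonsing_inv M hMdet
    have hMi' : M⁻¹ * M = 1 := Matrix.nonsing_inv_mul M hMdet
    have hMinv : (M⁻¹)ᵀ = M⁻¹ := by rw [Matrix.transpose_nonsing_inv, hMsym]
    have hP0 : lqPe (N + 1) A B Q R S H ε 0
        = Q 0 + (A 0)ᵀ * P₁ * A 0
          - ((A 0)ᵀ * P₁ * B 0 + (S 0)ᵀ) * M⁻¹ * ((B 0)ᵀ * P₁ * A 0 + S 0) := by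
      show lqPAux (N + 1) A B Q R S H ε (N + 1 - 0) = _
      rw [Nat.sub_zero, lqPAux, Nat.sub_self]
      have hPN : lqPAux (N + 1) A B Q R S H ε N = P₁ := hP1
      rw [hPN, hMdef]
    have hK0 : lqKe (N + 1) A B Q R S H ε 0
        = -(M⁻¹ * ((B 0)ᵀ * P₁ * A 0 + S 0)) := by
      unfold lqKe
      rw [show (0 : ℕ) + 1 = 1 from rfl, hP1, hMdef]
    have csq := comp_sq (A 0) (B 0) (Q 0) (R 0) (S 0) P₁ ε hP1sym' M hMdef hMsym hMi hMi'
    refine ⟨?_, ?_, ?_⟩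
    · show (lqPe (N + 1) A B Q R S H ε 0)ᵀ = _
      rw [hP0]
      simp only [transpose_sub, transpose_add, transpose_mul, transpose_transpose,
        hP1sym', hMinv, (hQ 0).eq, Matrix.mul_assoc]
    · intro x u
      rw [lqCostPert_succ, hP0]
      have h1 := hlow (A 0 *ᵥ x + B 0 *ᵥ u 0) (fun s => u (s + 1))
      have h2 := csq x (u 0)
      have h3 := hM0 (u 0 + (M⁻¹ * ((B 0)ᵀ * P₁ * A 0 + S 0)) *ᵥ x)
      linarith
    · intro x
      rw [lqCostPert_succ, hP0]
      have hu0 : lqUe (N + 1) A B Q R S H ε x 0 = lqKe (N + 1) A B Q R S H ε 0 *ᵥ x := rfl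
      have hx1 : A 0 *ᵥ x + B 0 *ᵥ (lqUe (N + 1) A B Q R S H ε x 0)
          = (A 0 + B 0 * lqKe (N + 1) A B Q R S H ε 0) *ᵥ x := by
        rw [hu0, mulVec_mulVec, add_mulVec]
      have husucc : (fun s => lqUe (N + 1) A B Q R S H ε x (s + 1))
          = lqUe N (fun s => A (s + 1)) (fun s => B (s + 1)) (fun s => Q (s + 1))
              (fun s => R (s + 1)) (fun s => S (s + 1)) H ε
              (A 0 *ᵥ x + B 0 *ᵥ (lqUe (N + 1) A B Q R S H ε x 0)) := by
        rw [hx1]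
        exact funext fun t => lqUe_succ N A B Q R S H ε x t
      rw [husucc, heq]
      have h2 := csq x (lqUe (N + 1) A B Q R S H ε x 0)
      have hw : lqUe (N + 1) A B Q R S H ε x 0
          + (M⁻¹ * ((B 0)ᵀ * P₁ * A 0 + S 0)) *ᵥ x = 0 := by
        rw [hu0, hK0, Matrix.neg_mulVec, neg_add_cancel]
      rw [hw] at h2
      simp only [dotProduct_zero, zero_dotProduct, add_zero] at h2
      linarith
lemma lqState_congr {n m : ℕ} (A : ℕ → Matrix (Fin n) (Fin n) ℝ)
    (B : ℕ → Matrix (Fin n) (Fin m) ℝ) (x₀ : Fin n → ℝ) (u u' : ℕ → Fin m → ℝ) (t : ℕ)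
    (h : ∀ s < t, u s = u' s) : lqState A B x₀ u t = lqState A B x₀ u' t := by
  induction t with
  | zero => rfl
  | succ t ih =>
    rw [lqState, lqState, ih (fun s hs => h s (Nat.lt_succ_of_lt hs)),
      h t (Nat.lt_succ_self t)]

lemma lqCost_congr {n m : ℕ} (N : ℕ) (A : ℕ → Matrix (Fin n) (Fin n) ℝ)
    (B : ℕ → Matrix (Fin n) (Fin m) ℝ) (Q : ℕ → Matrix (Fin n) (Fin n) ℝ)
    (R : ℕ → Matrix (Fin m) (Fin m) ℝ) (S : ℕ → Matrix (Fin m) (Fin n) ℝ)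
    (H : Matrix (Fin n) (Fin n) ℝ) (x₀ : Fin n → ℝ) (u u' : ℕ → Fin m → ℝ)
    (h : ∀ s < N, u s = u' s) :
    lqCost N A B Q R S H x₀ u = lqCost N A B Q R S H x₀ u' := by
  unfold lqCost
  rw [lqState_congr A B x₀ u u' N h]
  congr 1
  refine Finset.sum_congr rfl fun t ht => ?_
  have htN := Finset.mem_range.mp ht
  rw [lqState_congr A B x₀ u u' t (fun s hs => h s (hs.trans htN)), h t htN]

/-- Truncation/extension of a finite control. -/
def extCtl {m : ℕ} (N : ℕ) (v : Fin N → Fin m → ℝ) : ℕ → Fin m → ℝ :=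
  fun t => if h : t < N then v ⟨t, h⟩ else 0

lemma cont_mulVec {a b : ℕ} (M : Matrix (Fin a) (Fin b) ℝ) {X : Type*} [TopologicalSpace X]
    {g : X → Fin b → ℝ} (hg : Continuous g) : Continuous fun v => M *ᵥ g v := by
  refine continuous_pi fun i => ?_
  simp only [mulVec, dotProduct]
  exact continuous_finset_sum _ fun j _ =>
    continuous_const.mul ((continuous_apply j).comp hg)

lemma cont_dot {b : ℕ} {X : Type*} [TopologicalSpace X] {f g : X → Fin b → ℝ}
    (hf : Continuous f) (hg : Continuous g) : Continuous fun v => f v ⬝ᵥ g v := by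
  simp only [dotProduct]
  exact continuous_finset_sum _ fun j _ =>
    ((continuous_apply j).comp hf).mul ((continuous_apply j).comp hg)

lemma cont_extCtl {m N : ℕ} (t : ℕ) : Continuous fun v : Fin N → Fin m → ℝ => extCtl N v t := by
  unfold extCtl
  by_cases h : t < N
  · simp only [dif_pos h]; exact continuous_apply _
  · simp only [dif_neg h]; exact continuous_const

lemma cont_lqState {n m N : ℕ} (A : ℕ → Matrix (Fin n) (Fin n) ℝ)
    (B : ℕ → Matrix (Fin n) (Fin m) ℝ) (x₀ : Fin n → ℝ) (t : ℕ) :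
    Continuous fun v : Fin N → Fin m → ℝ => lqState A B x₀ (extCtl N v) t := by
  induction t with
  | zero => exact continuous_const
  | succ t ih =>
    show Continuous fun v : Fin N → Fin m → ℝ =>
      A t *ᵥ lqState A B x₀ (extCtl N v) t + B t *ᵥ extCtl N v t
    exact (cont_mulVec (A t) ih).add (cont_mulVec (B t) (cont_extCtl t))

lemma cont_lqCost {n m : ℕ} (N : ℕ) (A : ℕ → Matrix (Fin n) (Fin n) ℝ)
    (B : ℕ → Matrix (Fin n) (Fin m) ℝ) (Q : ℕ → Matrix (Fin n) (Fin n) ℝ)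
    (R : ℕ → Matrix (Fin m) (Fin m) ℝ) (S : ℕ → Matrix (Fin m) (Fin n) ℝ)
    (H : Matrix (Fin n) (Fin n) ℝ) (x₀ : Fin n → ℝ) :
    Continuous fun v : Fin N → Fin m → ℝ => lqCost N A B Q R S H x₀ (extCtl N v) := by
  unfold lqCost
  refine Continuous.add (continuous_finset_sum _ fun t _ => ?_)
    (cont_dot (cont_lqState A B x₀ N) (cont_mulVec H (cont_lqState A B x₀ N)))
  refine Continuous.add (Continuous.add ?_ ?_) ?_
  · exact cont_dot (cont_lqState A B x₀ t) (cont_mulVec (Q t) (cont_lqState A B x₀ t))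
  · exact continuous_const.mul
      (cont_dot (cont_extCtl t) (cont_mulVec (S t) (cont_lqState A B x₀ t)))
  · exact cont_dot (cont_extCtl t) (cont_mulVec (R t) (cont_extCtl t))
/-- Theorem 4 (2) ⇒ (1): boundedness of the family `{u^ε : 0 < ε ≤ 1}` in
`L²` implies open-loop solvability of Problem (LQ) at `x₀`. -/
theorem stmt_11 {n m : ℕ} (hn : 0 < n) (hm : 0 < m) (N : ℕ) (hN : 0 < N)
    (A : ℕ → Matrix (Fin n) (Fin n) ℝ) (B : ℕ → Matrix (Fin n) (Fin m) ℝ)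
    (Q : ℕ → Matrix (Fin n) (Fin n) ℝ) (R : ℕ → Matrix (Fin m) (Fin m) ℝ)
    (S : ℕ → Matrix (Fin m) (Fin n) ℝ) (H : Matrix (Fin n) (Fin n) ℝ)
    (hQ : ∀ t, (Q t).IsSymm) (hR : ∀ t, (R t).IsSymm) (hH : H.IsSymm)
    (hpos : ∀ u : ℕ → Fin m → ℝ, 0 ≤ lqCost N A B Q R S H 0 u)
    (x₀ : Fin n → ℝ)
    (hbdd : ∃ C : ℝ, ∀ ε : ℝ, 0 < ε → ε ≤ 1 →
      ∑ t ∈ range N, lqUe N A B Q R S H ε x₀ t ⬝ᵥ lqUe N A B Q R S H ε x₀ t ≤ C) :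
    ∃ ubar : ℕ → Fin m → ℝ, ∀ u : ℕ → Fin m → ℝ,
      lqCost N A B Q R S H x₀ ubar ≤ lqCost N A B Q R S H x₀ u := by
  obtain ⟨C, hC⟩ := hbdd
  have hC'0 : (0 : ℝ) ≤ max C 0 := le_max_right _ _
  set r := Real.sqrt (max C 0) with hrdef
  have hr0 : 0 ≤ r := Real.sqrt_nonneg _
  set εs : ℕ → ℝ := fun k => 1 / ((k : ℝ) + 1) with hεs
  have hεpos : ∀ k, 0 < εs k := fun k => by positivity
  have hεle1 : ∀ k, εs k ≤ 1 := by
    intro k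
    rw [hεs]
    rw [div_le_one (by positivity)]
    have : (0 : ℝ) ≤ (k : ℝ) := Nat.cast_nonneg k
    linarith
  have hε0 : Filter.Tendsto εs Filter.atTop (nhds 0) :=
    tendsto_one_div_add_atTop_nhds_zero_nat
  set vseq : ℕ → (Fin N → Fin m → ℝ) := fun k t => lqUe N A B Q R S H (εs k) x₀ t with hvseq
  have hmem : ∀ k, vseq k ∈ Metric.closedBall (0 : Fin N → Fin m → ℝ) r := by
    intro k
    rw [Metric.mem_closedBall, dist_zero_right]
    refine (pi_norm_le_iff_of_nonneg hr0).mpr fun t => ?_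
    refine (pi_norm_le_iff_of_nonneg hr0).mpr fun i => ?_
    rw [Real.norm_eq_abs, ← Real.sqrt_sq_eq_abs, hrdef]
    apply Real.sqrt_le_sqrt
    have h1 : (vseq k t i) ^ 2 ≤ vseq k t ⬝ᵥ vseq k t := by
      unfold dotProduct
      rw [sq]
      exact Finset.single_le_sum (fun j _ => mul_self_nonneg (vseq k t j)) (Finset.mem_univ i)
    have h2 : vseq k t ⬝ᵥ vseq k t
        ≤ ∑ s ∈ range N, lqUe N A B Q R S H (εs k) x₀ s ⬝ᵥ lqUe N A B Q R S H (εs k) x₀ s := by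
      have hv : vseq k t = lqUe N A B Q R S H (εs k) x₀ (t : ℕ) := rfl
      rw [hv]
      exact Finset.single_le_sum (fun s _ => dot_self_nonneg _) (Finset.mem_range.mpr t.isLt)
    have h3 := hC (εs k) (hεpos k) (hεle1 k)
    have h4 : C ≤ max C 0 := le_max_left _ _
    linarith
  obtain ⟨vbar, -, φ, hφ, hconv⟩ :=
    (isCompact_closedBall (0 : Fin N → Fin m → ℝ) r).tendsto_subseq hmem
  refine ⟨extCtl N vbar, fun u => ?_⟩
  have key : ∀ k, lqCost N A B Q R S H x₀ (extCtl N (vseq k))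
      ≤ lqCost N A B Q R S H x₀ u + εs k * ∑ t ∈ range N, u t ⬝ᵥ u t := by
    intro k
    obtain ⟨-, hlow, heqq⟩ := lq_main N A B Q R S H hQ hR hH hpos (εs k) (hεpos k)
    have e1 : lqCost N A B Q R S H x₀ (extCtl N (vseq k))
        = lqCost N A B Q R S H x₀ (lqUe N A B Q R S H (εs k) x₀) := by
      apply lqCost_congr
      intro s hs
      unfold extCtl
      rw [dif_pos hs]
    have e3 := heqq x₀
    have e4 := hlow x₀ u
    have e5 : 0 ≤ εs k * ∑ t ∈ range N,
        lqUe N A B Q R S H (εs k) x₀ t ⬝ᵥ lqUe N A B Q R S H (εs k) x₀ t :=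
      mul_nonneg (hεpos k).le (Finset.sum_nonneg fun t _ => dot_self_nonneg _)
    rw [e1]
    unfold lqCostPert at e3 e4
    linarith
  have hlim1 : Filter.Tendsto (fun k => lqCost N A B Q R S H x₀ (extCtl N (vseq (φ k))))
      Filter.atTop (nhds (lqCost N A B Q R S H x₀ (extCtl N vbar))) :=
    ((cont_lqCost N A B Q R S H x₀).tendsto vbar).comp hconv
  have hεφ : Filter.Tendsto (fun k => εs (φ k)) Filter.atTop (nhds 0) :=
    hε0.comp hφ.tendsto_atTop
  have hlim2 : Filter.Tendsto
      (fun k => lqCost N A B Q R S H x₀ u + εs (φ k) * ∑ t ∈ range N, u t ⬝ᵥ u t)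
      Filter.atTop (nhds (lqCost N A B Q R S H x₀ u + 0 * ∑ t ∈ range N, u t ⬝ᵥ u t)) :=
    tendsto_const_nhds.add (hεφ.mul tendsto_const_nhds)
  have hfin := le_of_tendsto_of_tendsto' hlim1 hlim2 (fun k => key (φ k))
  simpa using hfin
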